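/- Inversion of the Sinkhorn potential (first part of the inversion lemma): assume the kernel matrix K = (exp(−c_{ij}/2))_{i,j} is positive definite. Let α ∈ △^d and let f ∈ ℝ^d satisfy f_i = 2 log Σ_j α_j exp(−(f_j + c_{ij})/2) for all i (i.e. f is the symmetric Sinkhorn potential ∇Ω(α)). Then α is the unique minimizer of β ↦ Φ_C(β, f) over △^d, i.e. g-softmax(∇Ω(α)) = α. -/

import Mathlib

open Finset Real Filter

noncomputable section

/-- The probability simplex in `ℝ^d`. -/
def simplexS (d : ℕ) : Set (Fin d → ℝ) := stdSimplex ℝ (Fin d)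


open scoped Classical

/-- `Φ_C(α,f) = Σ_{i,j} α_i α_j exp(-(f_i + f_j + c_{ij})/2)`. -/
def Phi {d : ℕ} (C : Matrix (Fin d) (Fin d) ℝ) (α f : Fin d → ℝ) : ℝ :=
  ∑ i, ∑ j, α i * α j * Real.exp (-(f i + f j + C i j) / 2)

/-- The geometric log-sum-exp `Ω_C^*(f) = -log min_{α ∈ △^d} Φ_C(α, f)`. -/
def OmegaStar {d : ℕ} (C : Matrix (Fin d) (Fin d) ℝ) (f : Fin d → ℝ) : ℝ :=
  -Real.log (sInf ((fun α => Phi C α f) '' simplexS d))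

/-- The geometric softmax: the (unique, when the kernel is positive definite) minimizer of
`Φ_C(·, f)` over the simplex. -/
def gsoftmax {d : ℕ} (C : Matrix (Fin d) (Fin d) ℝ) (f : Fin d → ℝ) : Fin d → ℝ :=
  if h : ∃ α ∈ simplexS d, IsMinOn (fun β => Phi C β f) (simplexS d) α
  then h.choose else fun _ => 0

/-- The soft C-transform `T(f,α)_i = -2 log Σ_j α_j exp((f_j - c_{ij})/2)`. -/
def Tsoft {d : ℕ} (C : Matrix (Fin d) (Fin d) ℝ) (f α : Fin d → ℝ) : Fin d → ℝ :=
  fun i => -2 * Real.log (∑ j, α j * Real.exp ((f j - C i j) / 2))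

/-- `f` is the symmetric Sinkhorn potential of `α`: `-f = T(-f, α)`. -/
def IsSinkhornPotential {d : ℕ} (C : Matrix (Fin d) (Fin d) ℝ) (α f : Fin d → ℝ) : Prop :=
  -f = Tsoft C (-f) α

/-- The symmetric Sinkhorn potential `∇Ω(α)`: the (unique, when the kernel is positive
definite) `f` with `-f = T(-f, α)`. -/
def gradOmega {d : ℕ} (C : Matrix (Fin d) (Fin d) ℝ) (α : Fin d → ℝ) : Fin d → ℝ :=
  if h : ∃ f : Fin d → ℝ, IsSinkhornPotential C α f then h.choose else fun _ => 0

/-- The extrapolation `f^E = -T(-(f - Ω_C^*(f)·1), g-softmax(f)) + Ω_C^*(f)·1`. -/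
def extrap {d : ℕ} (C : Matrix (Fin d) (Fin d) ℝ) (f : Fin d → ℝ) : Fin d → ℝ :=
  fun i => -(Tsoft C (fun j => -(f j - OmegaStar C f)) (gsoftmax C f) i) + OmegaStar C f

/-- The kernel matrix `K = (exp(-c_{ij}/2))_{ij}`. -/
def kernelK {d : ℕ} (C : Matrix (Fin d) (Fin d) ℝ) : Matrix (Fin d) (Fin d) ℝ :=
  Matrix.of fun i j => Real.exp (-(C i j) / 2)

/-- Inversion of the Sinkhorn potential (first part): if `f = ∇Ω(α)` is the symmetric
Sinkhorn potential of `α ∈ △^d`, then `α` is the unique minimizer of `β ↦ Φ_C(β,f)` over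
the simplex; i.e. `g-softmax(∇Ω(α)) = α`. -/
theorem gsoftmax_inverts_sinkhorn_potential (d : ℕ) (hd : 1 ≤ d)
    (C : Matrix (Fin d) (Fin d) ℝ) (hCsym : C.IsSymm) (hCdiag : ∀ i, C i i = 0)
    (hK : (kernelK C).PosDef) (α : Fin d → ℝ) (hα : α ∈ simplexS d) (f : Fin d → ℝ)
    (hf : ∀ i, f i = 2 * Real.log (∑ j, α j * Real.exp (-(f j + C i j) / 2))) :
    (IsMinOn (fun β => Phi C β f) (simplexS d) α ∧
      ∀ β, β ∈ simplexS d → IsMinOn (fun γ => Phi C γ f) (simplexS d) β → β = α) ∧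
    gsoftmax C f = α := by
  classical
  set M : Fin d → Fin d → ℝ := fun i j => Real.exp (-(f i + f j + C i j) / 2) with hM
  have hMsym : ∀ i j, M i j = M j i := by
    intro i j
    simp only [hM]
    rw [hCsym.apply i j]
    ring_nf
  -- row sums are 1
  have hrow : ∀ i, ∑ j, α j * M i j = 1 := by
    intro i
    have hS : (0:ℝ) < ∑ j, α j * Real.exp (-(f j + C i j) / 2) := by
      obtain ⟨j, hj⟩ : ∃ j, 0 < α j := by
        by_contra h
        push_neg at h
        have hz : ∀ j, α j = 0 := fun j => le_antisymm (h j) (hα.1 j)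
        have h1 := hα.2
        rw [Finset.sum_eq_zero (fun j _ => hz j)] at h1
        exact zero_ne_one h1
      refine Finset.sum_pos' (fun k _ => mul_nonneg (hα.1 k) (Real.exp_pos _).le)
        ⟨j, Finset.mem_univ j, mul_pos hj (Real.exp_pos _)⟩
    have hfi : Real.exp (f i / 2) = ∑ j, α j * Real.exp (-(f j + C i j) / 2) := by
      rw [hf i, show (2 * Real.log (∑ j, α j * Real.exp (-(f j + C i j) / 2))) / 2
        = Real.log (∑ j, α j * Real.exp (-(f j + C i j) / 2)) by ring, Real.exp_log hS]
    have : ∀ j, α j * M i j = Real.exp (-(f i) / 2) * (α j * Real.exp (-(f j + C i j) / 2)) := by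
      intro j
      simp only [hM]
      rw [show -(f i + f j + C i j) / 2 = -(f i) / 2 + (-(f j + C i j) / 2) by ring,
        Real.exp_add]
      ring
    rw [Finset.sum_congr rfl (fun j _ => this j), ← Finset.mul_sum, ← hfi,
      ← Real.exp_add, show -f i / 2 + f i / 2 = 0 by ring, Real.exp_zero]
  -- positivity of the quadratic form
  have hQpos : ∀ x : Fin d → ℝ, x ≠ 0 → 0 < ∑ i, ∑ j, x i * x j * M i j := by
    intro x hx
    set y : Fin d → ℝ := fun i => x i * Real.exp (-(f i) / 2) with hy
    have hy0 : y ≠ 0 := by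
      intro h
      apply hx
      funext i
      have := congrFun h i
      simp only [hy, Pi.zero_apply] at this ⊢
      exact (mul_eq_zero.1 this).resolve_right (Real.exp_ne_zero _)
    have := hK.dotProduct_mulVec_pos hy0
    have hrw : dotProduct (star y) ((kernelK C).mulVec y) = ∑ i, ∑ j, x i * x j * M i j := by
      simp only [dotProduct, Matrix.mulVec, star, kernelK, Matrix.of_apply,
        Finset.mul_sum, hy, hM, Pi.star_apply, star_trivial]
      refine Finset.sum_congr rfl fun i _ => Finset.sum_congr rfl fun j _ => ?_
      rw [show -(f i + f j + C i j) / 2 = -(f i) / 2 + (-(C i j) / 2 + -(f j) / 2) by ring,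
        Real.exp_add, Real.exp_add]
      ring
    rw [hrw] at this
    exact this
  have hQnonneg : ∀ x : Fin d → ℝ, 0 ≤ ∑ i, ∑ j, x i * x j * M i j := by
    intro x
    by_cases hx : x = 0
    · simp [hx]
    · exact (hQpos x hx).le
  -- key decomposition: Phi C β f = Q(β - α) + 1 for β in the simplex
  have key : ∀ β ∈ simplexS d,
      Phi C β f = (∑ i, ∑ j, (β i - α i) * (β j - α j) * M i j) + 1 := by
    intro β hβ
    have hB1 : ∑ i, ∑ j, β i * α j * M i j = 1 := by
      have : ∀ i, ∑ j, β i * α j * M i j = β i * ∑ j, α j * M i j := by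
        intro i; rw [Finset.mul_sum]; exact Finset.sum_congr rfl fun j _ => by ring
      rw [Finset.sum_congr rfl fun i _ => this i]
      simp only [hrow, mul_one]
      exact hβ.2
    have hB2 : ∑ i, ∑ j, α i * β j * M i j = 1 := by
      rw [Finset.sum_comm]
      have : ∀ j, ∑ i, α i * β j * M i j = β j * ∑ i, α i * M j i := by
        intro j; rw [Finset.mul_sum]
        exact Finset.sum_congr rfl fun i _ => by rw [hMsym i j]; ring
      rw [Finset.sum_congr rfl fun j _ => this j]
      simp only [hrow, mul_one]
      exact hβ.2
    have hQα : ∑ i, ∑ j, α i * α j * M i j = 1 := by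
      have : ∀ i, ∑ j, α i * α j * M i j = α i * ∑ j, α j * M i j := by
        intro i; rw [Finset.mul_sum]; exact Finset.sum_congr rfl fun j _ => by ring
      rw [Finset.sum_congr rfl fun i _ => this i]
      simp only [hrow, mul_one]
      exact hα.2
    have expand : Phi C β f = (∑ i, ∑ j, (β i - α i) * (β j - α j) * M i j)
        + (∑ i, ∑ j, β i * α j * M i j) + (∑ i, ∑ j, α i * β j * M i j)
        - (∑ i, ∑ j, α i * α j * M i j) := by
      simp only [Phi, ← Finset.sum_add_distrib, ← Finset.sum_sub_distrib, hM]
      refine Finset.sum_congr rfl fun i _ => Finset.sum_congr rfl fun j _ => ?_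
      ring
    rw [expand, hB1, hB2, hQα]
    ring
  have hPhiα : Phi C α f = 1 := by
    have := key α hα
    simpa using this
  have hmin : IsMinOn (fun β => Phi C β f) (simplexS d) α := by
    intro β hβ
    simp only [Set.mem_setOf_eq, hPhiα]
    rw [key β hβ]
    have := hQnonneg (fun i => β i - α i)
    linarith
  have huniq : ∀ β, β ∈ simplexS d → IsMinOn (fun γ => Phi C γ f) (simplexS d) β → β = α := by
    intro β hβ hβmin
    by_contra hne
    have hx : (fun i => β i - α i) ≠ 0 := by
      intro h
      apply hne
      funext i
      have := congrFun h i
      simp only [Pi.zero_apply] at this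
      linarith
    have hpos := hQpos _ hx
    have hle : Phi C β f ≤ Phi C α f := hβmin hα
    rw [key β hβ, hPhiα] at hle
    linarith
  refine ⟨⟨hmin, huniq⟩, ?_⟩
  have hex : ∃ γ ∈ simplexS d, IsMinOn (fun β => Phi C β f) (simplexS d) γ := ⟨α, hα, hmin⟩
  rw [gsoftmax, dif_pos hex]
  exact huniq _ hex.choose_spec.1 hex.choose_spec.2
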